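/- The function q(ρ) = 1 + (1-ρ)√((3-ρ)(1+ρ))/(2π) on the open interval (-1, 1) attains its unique maximum at ρ = 1 - √2. -/
import Mathlib


open Real

noncomputable def q (ρ : ℝ) : ℝ :=
  1 + (1 - ρ) * Real.sqrt ((3 - ρ) * (1 + ρ)) / (2 * π)

theorem stmt16 :
    (1 - Real.sqrt 2) ∈ Set.Ioo (-1 : ℝ) 1 ∧
    ∀ ρ ∈ Set.Ioo (-1 : ℝ) 1, ρ ≠ 1 - Real.sqrt 2 →
      q ρ < q (1 - Real.sqrt 2) := by
  have hs2 : Real.sqrt 2 ^ 2 = 2 := Real.sq_sqrt (by norm_num)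
  have hs2pos : 0 < Real.sqrt 2 := Real.sqrt_pos.mpr (by norm_num)
  have hs2lt : Real.sqrt 2 < 2 := by nlinarith
  constructor
  · constructor <;> nlinarith
  · intro ρ hρ hne
    obtain ⟨h1, h2⟩ := hρ
    -- RHS value is 2
    have harg : (3 - (1 - Real.sqrt 2)) * (1 + (1 - Real.sqrt 2)) = 2 := by nlinarith
    have hR : (1 - (1 - Real.sqrt 2)) * Real.sqrt ((3 - (1 - Real.sqrt 2)) * (1 + (1 - Real.sqrt 2))) = 2 := by
      rw [harg]
      linear_combination hs2
    -- LHS < 2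
    have hargρ : 0 ≤ (3 - ρ) * (1 + ρ) := by nlinarith
    have hsq : Real.sqrt ((3 - ρ) * (1 + ρ)) ^ 2 = (3 - ρ) * (1 + ρ) := Real.sq_sqrt hargρ
    have hLnn : 0 ≤ (1 - ρ) * Real.sqrt ((3 - ρ) * (1 + ρ)) :=
      mul_nonneg (by linarith) (Real.sqrt_nonneg _)
    have hne2 : (1 - ρ) ^ 2 ≠ 2 := by
      intro h
      apply hne
      have : (1 - ρ) ^ 2 = Real.sqrt 2 ^ 2 := by rw [h, hs2]
      have h1ρ : 1 - ρ = Real.sqrt 2 := by nlinarith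
      linarith
    have hlt2 : ((1 - ρ) * Real.sqrt ((3 - ρ) * (1 + ρ))) ^ 2 < 2 ^ 2 := by
      have hz : ((1 - ρ) ^ 2 - 2) ≠ 0 := sub_ne_zero.mpr hne2
      have : ((1 - ρ) ^ 2 - 2) ^ 2 > 0 :=
        lt_of_le_of_ne (sq_nonneg _) (Ne.symm (pow_ne_zero 2 hz))
      nlinarith [hsq]
    have hL : (1 - ρ) * Real.sqrt ((3 - ρ) * (1 + ρ)) < 2 :=
      lt_of_pow_lt_pow_left₀ 2 (by norm_num) hlt2
    unfold q
    rw [hR]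
    have hπ : 0 < 2 * π := by positivity
    gcongr
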